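/- arXiv:nlin/0210016 — 2 statements merged into one kernel-verified Lean document; each statement's English description precedes it below -/
import Mathlib

section
/- Let n ≥ 1 and let Φ : ℝⁿ → ℝⁿ be a C² diffeomorphism preserving Lebesgue measure. Let M, M₂ ≥ 0 satisfy ‖DΦ(z)‖ ≤ M and ‖D²Φ(z)‖ ≤ M₂ for all z ∈ ℝⁿ (norms of the first and second total derivatives as linear resp. bilinear maps). Then for every twice continuously differentiable compactly supported u : ℝⁿ → ℝ, ‖D²(u∘Φ)‖_{L²(ℝⁿ)} ≤ 2 ( M₂ ‖∇u‖_{L²(ℝⁿ)} + M² ‖D²u‖_{L²(ℝⁿ)} ); equivalently ‖u∘Φ‖_{Ḣ²} ≤ 2( M₂ ‖u‖_{Ḣ¹} + M² ‖u‖_{Ḣ²} ). -/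
open MeasureTheory

lemma aux_bilin {E F : Type*} [NormedAddCommGroup E] [NormedSpace ℝ E]
    [NormedAddCommGroup F] [NormedSpace ℝ F] (f : E → F) (x : E) (h k : E) :
    ‖fderiv ℝ (fderiv ℝ f) x h k‖ ≤ ‖iteratedFDeriv ℝ 2 f x‖ * ‖h‖ * ‖k‖ := by
  have h2 := iteratedFDeriv_two_apply (𝕜 := ℝ) f x ![h, k]
  simp only [Matrix.cons_val_zero, Matrix.cons_val_one, Matrix.head_cons] at h2
  rw [← h2]
  calc ‖iteratedFDeriv ℝ 2 f x ![h, k]‖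
      ≤ ‖iteratedFDeriv ℝ 2 f x‖ * ∏ i, ‖(![h, k]) i‖ :=
        (iteratedFDeriv ℝ 2 f x).le_opNorm _
    _ = ‖iteratedFDeriv ℝ 2 f x‖ * ‖h‖ * ‖k‖ := by
        simp [Fin.prod_univ_two, mul_assoc]

lemma aux_pointwise {E : Type*} [NormedAddCommGroup E] [NormedSpace ℝ E]
    (Φ : E → E) (u : E → ℝ) (hΦ : ContDiff ℝ 2 Φ) (hu : ContDiff ℝ 2 u)
    (M M₂ : ℝ) (hM : 0 ≤ M)
    (hDΦ : ∀ z, ‖fderiv ℝ Φ z‖ ≤ M)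
    (hD2Φ : ∀ z, ‖iteratedFDeriv ℝ 2 Φ z‖ ≤ M₂) (z : E) :
    ‖iteratedFDeriv ℝ 2 (u ∘ Φ) z‖
      ≤ M₂ * ‖fderiv ℝ u (Φ z)‖ + M ^ 2 * ‖iteratedFDeriv ℝ 2 u (Φ z)‖ := by
  have hΦd : Differentiable ℝ Φ := hΦ.differentiable two_ne_zero
  have hud : Differentiable ℝ u := hu.differentiable two_ne_zero
  have hu1 : ContDiff ℝ 1 (fderiv ℝ u) := hu.fderiv_right (by norm_num)
  have hΦ1 : ContDiff ℝ 1 (fderiv ℝ Φ) := hΦ.fderiv_right (by norm_num)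
  have hud' : Differentiable ℝ (fderiv ℝ u) := hu1.differentiable one_ne_zero
  have hΦd' : Differentiable ℝ (fderiv ℝ Φ) := hΦ1.differentiable one_ne_zero
  set c : E → E →L[ℝ] ℝ := fun w => fderiv ℝ u (Φ w) with hc
  have hcd : Differentiable ℝ c := fun w => (hud' (Φ w)).comp w (hΦd w)
  have hfc : ∀ w, fderiv ℝ (u ∘ Φ) w = (c w).comp (fderiv ℝ Φ w) := fun w =>
    fderiv_comp w (hud (Φ w)) (hΦd w)
  have hfcz : fderiv ℝ c z = (fderiv ℝ (fderiv ℝ u) (Φ z)).comp (fderiv ℝ Φ z) :=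
    fderiv_comp z (hud' (Φ z)) (hΦd z)
  have hkey : fderiv ℝ (fderiv ℝ (u ∘ Φ)) z
      = fderiv ℝ (fun w => (c w).comp (fderiv ℝ Φ w)) z := by
    congr 1
    exact funext hfc
  have hclm := fderiv_clm_comp (hcd z) (hΦd' z)
  have hnonneg : 0 ≤ M₂ := le_trans (norm_nonneg _) (hD2Φ z)
  refine ContinuousMultilinearMap.opNorm_le_bound
    (add_nonneg (mul_nonneg hnonneg (norm_nonneg _))
      (mul_nonneg (pow_nonneg hM 2) (norm_nonneg _))) (fun m => ?_)
  rw [iteratedFDeriv_two_apply, hkey, hclm]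
  simp only [ContinuousLinearMap.add_apply, ContinuousLinearMap.coe_comp', Function.comp_apply,
    ContinuousLinearMap.compL_apply, ContinuousLinearMap.flip_apply, hfcz, Fin.prod_univ_two]
  have e1 : ‖(c z) ((fderiv ℝ (fderiv ℝ Φ) z (m 0)) (m 1))‖
      ≤ ‖c z‖ * (M₂ * ‖m 0‖ * ‖m 1‖) := by
    refine le_trans ((c z).le_opNorm _) (mul_le_mul_of_nonneg_left ?_ (norm_nonneg _))
    refine le_trans (aux_bilin Φ z (m 0) (m 1)) ?_
    gcongr
    exact hD2Φ z
  have e2 : ‖(fderiv ℝ (fderiv ℝ u) (Φ z) ((fderiv ℝ Φ z) (m 0))) ((fderiv ℝ Φ z) (m 1))‖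
      ≤ ‖iteratedFDeriv ℝ 2 u (Φ z)‖ * (M * ‖m 0‖) * (M * ‖m 1‖) := by
    refine le_trans (aux_bilin u (Φ z) _ _) ?_
    gcongr
    · exact le_trans ((fderiv ℝ Φ z).le_opNorm _)
        (mul_le_mul_of_nonneg_right (hDΦ z) (norm_nonneg _))
    · exact le_trans ((fderiv ℝ Φ z).le_opNorm _)
        (mul_le_mul_of_nonneg_right (hDΦ z) (norm_nonneg _))
  calc ‖(c z) ((fderiv ℝ (fderiv ℝ Φ) z (m 0)) (m 1))
        + (fderiv ℝ (fderiv ℝ u) (Φ z) ((fderiv ℝ Φ z) (m 0))) ((fderiv ℝ Φ z) (m 1))‖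
      ≤ ‖(c z) ((fderiv ℝ (fderiv ℝ Φ) z (m 0)) (m 1))‖
        + ‖(fderiv ℝ (fderiv ℝ u) (Φ z) ((fderiv ℝ Φ z) (m 0))) ((fderiv ℝ Φ z) (m 1))‖ :=
        norm_add_le _ _
    _ ≤ ‖c z‖ * (M₂ * ‖m 0‖ * ‖m 1‖)
        + ‖iteratedFDeriv ℝ 2 u (Φ z)‖ * (M * ‖m 0‖) * (M * ‖m 1‖) := add_le_add e1 e2
    _ = (M₂ * ‖fderiv ℝ u (Φ z)‖ + M ^ 2 * ‖iteratedFDeriv ℝ 2 u (Φ z)‖) * (‖m 0‖ * ‖m 1‖) := by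
        ring


/-- Transport estimate in `Ḣ²`: if `Φ` is a measure-preserving `C²` diffeomorphism of `ℝⁿ`
with `‖DΦ‖ ≤ M` and `‖D²Φ‖ ≤ M₂`, then for every `C²` compactly supported `u`,
`‖u∘Φ‖_{Ḣ²} ≤ 2(M₂‖u‖_{Ḣ¹} + M²‖u‖_{Ḣ²})`. -/
theorem liouville_transport_H2_estimate
    (n : ℕ) (hn : 1 ≤ n)
    (Φ : EuclideanSpace ℝ (Fin n) ≃ EuclideanSpace ℝ (Fin n))
    (hΦ : ContDiff ℝ 2 ⇑Φ) (hΦsymm : ContDiff ℝ 2 ⇑Φ.symm)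
    (hmp : MeasurePreserving ⇑Φ volume volume)
    (M M₂ : ℝ) (hM : 0 ≤ M) (hM₂ : 0 ≤ M₂)
    (hDΦ : ∀ z, ‖fderiv ℝ (⇑Φ) z‖ ≤ M)
    (hD2Φ : ∀ z, ‖iteratedFDeriv ℝ 2 (⇑Φ) z‖ ≤ M₂)
    (u : EuclideanSpace ℝ (Fin n) → ℝ)
    (hu : ContDiff ℝ 2 u) (husupp : HasCompactSupport u) :
    Real.sqrt (∫ z, ‖iteratedFDeriv ℝ 2 (u ∘ ⇑Φ) z‖ ^ 2)
      ≤ 2 * (M₂ * Real.sqrt (∫ x, ‖fderiv ℝ u x‖ ^ 2)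
          + M ^ 2 * Real.sqrt (∫ x, ‖iteratedFDeriv ℝ 2 u x‖ ^ 2)) := by
  classical
  -- measurable embedding
  have hemb : MeasurableEmbedding ⇑Φ :=
    (Homeomorph.mk Φ hΦ.continuous hΦsymm.continuous).measurableEmbedding
  -- integrability of derivative squares
  have hcont1 : Continuous fun x => ‖fderiv ℝ u x‖ ^ 2 :=
    ((hu.continuous_fderiv two_ne_zero).norm.pow 2)
  have hcont2 : Continuous fun x => ‖iteratedFDeriv ℝ 2 u x‖ ^ 2 :=
    ((hu.continuous_iteratedFDeriv le_rfl).norm.pow 2)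
  have hsupp1 : HasCompactSupport fun x => ‖fderiv ℝ u x‖ ^ 2 :=
    (husupp.fderiv ℝ).comp_left (g := fun t => ‖t‖ ^ 2) (by simp)
  have hsupp2 : HasCompactSupport fun x => ‖iteratedFDeriv ℝ 2 u x‖ ^ 2 :=
    (husupp.iteratedFDeriv 2).comp_left (g := fun t => ‖t‖ ^ 2) (by simp)
  have hI1 : Integrable (fun x => ‖fderiv ℝ u x‖ ^ 2) :=
    hcont1.integrable_of_hasCompactSupport hsupp1
  have hI2 : Integrable (fun x => ‖iteratedFDeriv ℝ 2 u x‖ ^ 2) :=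
    hcont2.integrable_of_hasCompactSupport hsupp2
  set g : EuclideanSpace ℝ (Fin n) → ℝ := fun x =>
    2 * M₂ ^ 2 * ‖fderiv ℝ u x‖ ^ 2 + 2 * M ^ 4 * ‖iteratedFDeriv ℝ 2 u x‖ ^ 2 with hg
  have hgI : Integrable g := (hI1.const_mul _).add (hI2.const_mul _)
  have hgΦI : Integrable (fun z => g (Φ z)) := (hmp.integrable_comp_emb hemb).2 hgI
  -- pointwise bound
  have hpt : ∀ z, ‖iteratedFDeriv ℝ 2 (u ∘ ⇑Φ) z‖ ^ 2 ≤ g (Φ z) := by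
    intro z
    have h := aux_pointwise ⇑Φ u hΦ hu M M₂ hM hDΦ hD2Φ z
    have h1 : (0:ℝ) ≤ ‖iteratedFDeriv ℝ 2 (u ∘ ⇑Φ) z‖ := norm_nonneg _
    have h2 : (0:ℝ) ≤ M₂ * ‖fderiv ℝ u (Φ z)‖ :=
      mul_nonneg hM₂ (norm_nonneg _)
    have h3 : (0:ℝ) ≤ M ^ 2 * ‖iteratedFDeriv ℝ 2 u (Φ z)‖ :=
      mul_nonneg (pow_nonneg hM 2) (norm_nonneg _)
    simp only [hg]
    nlinarith [sq_nonneg (M₂ * ‖fderiv ℝ u (Φ z)‖ - M ^ 2 * ‖iteratedFDeriv ℝ 2 u (Φ z)‖)]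
  have hint : ∫ z, ‖iteratedFDeriv ℝ 2 (u ∘ ⇑Φ) z‖ ^ 2 ≤ ∫ z, g (Φ z) := by
    refine integral_mono_of_nonneg ?_ hgΦI ?_
    · exact Filter.Eventually.of_forall fun z => sq_nonneg _
    · exact Filter.Eventually.of_forall hpt
  have hchange : ∫ z, g (Φ z) = ∫ x, g x := hmp.integral_comp hemb g
  have hsplit : ∫ x, g x = 2 * M₂ ^ 2 * (∫ x, ‖fderiv ℝ u x‖ ^ 2)
      + 2 * M ^ 4 * (∫ x, ‖iteratedFDeriv ℝ 2 u x‖ ^ 2) := by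
    rw [hg]
    rw [integral_add (hI1.const_mul _) (hI2.const_mul _), integral_const_mul,
      integral_const_mul]
  set J₁ := ∫ x, ‖fderiv ℝ u x‖ ^ 2 with hJ1
  set J₂ := ∫ x, ‖iteratedFDeriv ℝ 2 u x‖ ^ 2 with hJ2
  have hJ1n : 0 ≤ J₁ := integral_nonneg fun x => sq_nonneg _
  have hJ2n : 0 ≤ J₂ := integral_nonneg fun x => sq_nonneg _
  have key : ∫ z, ‖iteratedFDeriv ℝ 2 (u ∘ ⇑Φ) z‖ ^ 2
      ≤ 2 * M₂ ^ 2 * J₁ + 2 * M ^ 4 * J₂ := by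
    rw [← hsplit, ← hchange]; exact hint
  have step1 : Real.sqrt (∫ z, ‖iteratedFDeriv ℝ 2 (u ∘ ⇑Φ) z‖ ^ 2)
      ≤ Real.sqrt (2 * M₂ ^ 2 * J₁ + 2 * M ^ 4 * J₂) := Real.sqrt_le_sqrt key
  refine le_trans step1 ?_
  have hs : 2 * M₂ ^ 2 * J₁ + 2 * M ^ 4 * J₂
      ≤ (2 * (M₂ * Real.sqrt J₁ + M ^ 2 * Real.sqrt J₂)) ^ 2 := by
    have e1 : Real.sqrt J₁ ^ 2 = J₁ := Real.sq_sqrt hJ1n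
    have e2 : Real.sqrt J₂ ^ 2 = J₂ := Real.sq_sqrt hJ2n
    have s1 : 0 ≤ Real.sqrt J₁ := Real.sqrt_nonneg _
    have s2 : 0 ≤ Real.sqrt J₂ := Real.sqrt_nonneg _
    have f1 : M₂ ^ 2 * J₁ = (M₂ * Real.sqrt J₁) ^ 2 := by rw [mul_pow, e1]
    have f2 : M ^ 4 * J₂ = (M ^ 2 * Real.sqrt J₂) ^ 2 := by
      rw [mul_pow, e2]; ring
    nlinarith [mul_nonneg (mul_nonneg hM₂ s1) (mul_nonneg (pow_nonneg hM 2) s2),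
      sq_nonneg (M₂ * Real.sqrt J₁), sq_nonneg (M ^ 2 * Real.sqrt J₂)]
  calc Real.sqrt (2 * M₂ ^ 2 * J₁ + 2 * M ^ 4 * J₂)
      ≤ Real.sqrt ((2 * (M₂ * Real.sqrt J₁ + M ^ 2 * Real.sqrt J₂)) ^ 2) :=
        Real.sqrt_le_sqrt hs
    _ = 2 * (M₂ * Real.sqrt J₁ + M ^ 2 * Real.sqrt J₂) := by
        refine Real.sqrt_sq ?_
        positivity
end

section
/- Let d ≥ 3, let e ∈ ℝ^d be a unit vector and H = { p ∈ ℝ^d : p·e = 0 } its orthogonal hyperplane equipped with its (d−1)-dimensional Lebesgue measure σ. Let g : ℝ^d → ℝ be continuous and nonnegative with g(0) > 0 and ∫_H (1 + |p|²) g(p) dσ(p) < ∞. Define the real symmetric d×d matrix D by D_{ml} = ∫_H p_m p_l g(p) dσ(p). Then the kernel of D equals the line ℝ·e; equivalently, D has rank d − 1. -/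
open MeasureTheory Matrix
open scoped RealInnerProductSpace

lemma euclid_coord_abs_le_norm {d : ℕ} (x : EuclideanSpace ℝ (Fin d)) (m : Fin d) :
    |x m| ≤ ‖x‖ := by
  rw [EuclideanSpace.norm_eq, ← Real.sqrt_sq_eq_abs]
  refine Real.sqrt_le_sqrt ?_
  have := Finset.single_le_sum (f := fun i => ‖x i‖ ^ 2)
    (fun i _ => sq_nonneg _) (Finset.mem_univ m)
  simpa [Real.norm_eq_abs, sq_abs] using this


/-- Rank of the momentum diffusion matrix: if `g` is continuous, nonnegative, `g(0) > 0`
and `∫_H (1+|p|²) g < ∞` on the hyperplane `H = e^⊥` (realized through a linear isometry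
`φ` from `ℝ^{d−1}` onto `H`), then the symmetric matrix `D_{ml} = ∫_H p_m p_l g(p) dσ(p)`
has kernel exactly `ℝ·e`, i.e. rank `d − 1`. -/
theorem diffusion_matrix_rank
    (d : ℕ) (hd : 3 ≤ d)
    (e : EuclideanSpace ℝ (Fin d)) (he : ‖e‖ = 1)
    (φ : EuclideanSpace ℝ (Fin (d - 1)) →ₗᵢ[ℝ] EuclideanSpace ℝ (Fin d))
    (hφ : Set.range ⇑φ = {p : EuclideanSpace ℝ (Fin d) | ⟪p, e⟫ = 0})
    (g : EuclideanSpace ℝ (Fin d) → ℝ)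
    (hg : Continuous g) (hg0 : ∀ p, 0 ≤ g p) (hgpos : 0 < g 0)
    (hint : Integrable
      (fun u : EuclideanSpace ℝ (Fin (d - 1)) => (1 + ‖φ u‖ ^ 2) * g (φ u)))
    (D : Matrix (Fin d) (Fin d) ℝ)
    (hD : ∀ m l, D m l = ∫ u : EuclideanSpace ℝ (Fin (d - 1)), φ u m * φ u l * g (φ u)) :
    LinearMap.ker D.mulVecLin
        = Submodule.span ℝ {(EuclideanSpace.equiv (Fin d) ℝ) e} ∧
    Module.finrank ℝ (LinearMap.range D.mulVecLin) = d - 1 := by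
  classical
  have hφc : Continuous φ := φ.continuous
  have hcoord : ∀ m : Fin d, Continuous fun u : EuclideanSpace ℝ (Fin (d - 1)) => φ u m :=
    fun m => (EuclideanSpace.proj m).continuous.comp hφc
  -- integrability of each entry integrand
  have hint_ml : ∀ m l : Fin d,
      Integrable (fun u : EuclideanSpace ℝ (Fin (d - 1)) => φ u m * φ u l * g (φ u)) := by
    intro m l
    have hc : Continuous fun u : EuclideanSpace ℝ (Fin (d - 1)) => φ u m * φ u l * g (φ u) :=
      ((hcoord m).mul (hcoord l)).mul (hg.comp hφc)
    refine hint.mono' hc.aestronglyMeasurable (Filter.Eventually.of_forall fun u => ?_)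
    have h1 : |φ u m| ≤ ‖φ u‖ := euclid_coord_abs_le_norm _ _
    have h2 : |φ u l| ≤ ‖φ u‖ := euclid_coord_abs_le_norm _ _
    have hgn : 0 ≤ g (φ u) := hg0 _
    have : ‖φ u m * φ u l * g (φ u)‖ = |φ u m| * |φ u l| * g (φ u) := by
      rw [Real.norm_eq_abs, abs_mul, abs_mul, abs_of_nonneg hgn]
    rw [this]
    have hb : |φ u m| * |φ u l| ≤ 1 + ‖φ u‖ ^ 2 := by
      nlinarith [abs_nonneg (φ u m), abs_nonneg (φ u l), norm_nonneg (φ u)]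
    exact mul_le_mul_of_nonneg_right hb hgn
  -- the key quadratic form identity
  have key : ∀ ξ : Fin d → ℝ, ∑ m, ξ m * D.mulVec ξ m
      = ∫ u : EuclideanSpace ℝ (Fin (d - 1)), (∑ m, ξ m * φ u m) ^ 2 * g (φ u) := by
    intro ξ
    have h1 : ∀ u : EuclideanSpace ℝ (Fin (d - 1)),
        (∑ m, ξ m * φ u m) ^ 2 * g (φ u)
          = ∑ m, ∑ l, ξ m * ξ l * (φ u m * φ u l * g (φ u)) := by
      intro u
      rw [sq, Finset.sum_mul_sum, Finset.sum_mul]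
      refine Finset.sum_congr rfl fun m _ => ?_
      rw [Finset.sum_mul]
      exact Finset.sum_congr rfl fun l _ => by ring
    calc ∑ m, ξ m * D.mulVec ξ m
        = ∑ m, ∑ l, ξ m * ξ l *
            ∫ u : EuclideanSpace ℝ (Fin (d - 1)), φ u m * φ u l * g (φ u) := by
          refine Finset.sum_congr rfl fun m _ => ?_
          rw [Matrix.mulVec, dotProduct, Finset.mul_sum]
          exact Finset.sum_congr rfl fun l _ => by rw [hD m l]; ring
      _ = ∑ m, ∑ l, ∫ u : EuclideanSpace ℝ (Fin (d - 1)),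
            ξ m * ξ l * (φ u m * φ u l * g (φ u)) := by
          refine Finset.sum_congr rfl fun m _ => Finset.sum_congr rfl fun l _ => ?_
          rw [integral_const_mul]
      _ = ∫ u : EuclideanSpace ℝ (Fin (d - 1)),
            ∑ m, ∑ l, ξ m * ξ l * (φ u m * φ u l * g (φ u)) := by
          rw [integral_finset_sum _ fun m _ =>
            integrable_finset_sum _ fun l _ => (hint_ml m l).const_mul _]
          exact Finset.sum_congr rfl fun m _ =>
            (integral_finset_sum _ fun l _ => (hint_ml m l).const_mul _).symm
      _ = ∫ u : EuclideanSpace ℝ (Fin (d - 1)), (∑ m, ξ m * φ u m) ^ 2 * g (φ u) := by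
          exact integral_congr_ae (Filter.Eventually.of_forall fun u => (h1 u).symm)
  -- e' := coordinates of e
  set e' : Fin d → ℝ := (EuclideanSpace.equiv (Fin d) ℝ) e with he'
  -- e' is in the kernel
  have heker : D.mulVec e' = 0 := by
    funext m
    have hz : ∀ u : EuclideanSpace ℝ (Fin (d - 1)), ∑ l, φ u l * e l = 0 := by
      intro u
      have : φ u ∈ Set.range ⇑φ := ⟨u, rfl⟩
      rw [hφ] at this
      have h0 : ⟪φ u, e⟫ = 0 := this
      simpa [PiLp.inner_apply, RCLike.inner_apply, mul_comm] using h0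
    have : D.mulVec e' m = ∑ l, ∫ u : EuclideanSpace ℝ (Fin (d - 1)),
        (φ u m * φ u l * g (φ u)) * e l := by
      rw [Matrix.mulVec, dotProduct]
      exact Finset.sum_congr rfl fun l _ => by rw [hD m l, ← integral_mul_const]; rfl
    rw [this, ← integral_finset_sum _ fun l _ => (hint_ml m l).mul_const _]
    have : ∀ u : EuclideanSpace ℝ (Fin (d - 1)),
        ∑ l, (φ u m * φ u l * g (φ u)) * e l = 0 := by
      intro u
      have : ∑ l, (φ u m * φ u l * g (φ u)) * e l
          = (φ u m * g (φ u)) * ∑ l, φ u l * e l := by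
        rw [Finset.mul_sum]; exact Finset.sum_congr rfl fun l _ => by ring
      rw [this, hz u, mul_zero]
    simp only [this, integral_zero, Pi.zero_apply]
  -- kernel equality
  have hker : LinearMap.ker D.mulVecLin = Submodule.span ℝ {e'} := by
    apply le_antisymm
    · intro ξ hξ
      have hmv : D.mulVec ξ = 0 := hξ
      have hzero : ∑ m, ξ m * D.mulVec ξ m = 0 := by simp [hmv]
      rw [key ξ] at hzero
      -- the integrand is nonneg, continuous, integrable: hence identically 0
      have hcont2 : Continuous fun u : EuclideanSpace ℝ (Fin (d - 1)) =>
          (∑ m, ξ m * φ u m) ^ 2 * g (φ u) := by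
        refine Continuous.mul ?_ (hg.comp hφc)
        exact (continuous_finset_sum _ fun m _ => continuous_const.mul (hcoord m)).pow 2
      have hintq : Integrable fun u : EuclideanSpace ℝ (Fin (d - 1)) =>
          (∑ m, ξ m * φ u m) ^ 2 * g (φ u) := by
        have := integrable_finset_sum (μ := (volume : Measure (EuclideanSpace ℝ (Fin (d-1)))))
          (Finset.univ : Finset (Fin d)) (fun m _ =>
            integrable_finset_sum (Finset.univ : Finset (Fin d)) fun l _ =>
              ((hint_ml m l).const_mul (ξ m * ξ l)))
        refine this.congr (Filter.Eventually.of_forall fun u => ?_)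
        show ∑ m, ∑ l, ξ m * ξ l * (φ u m * φ u l * g (φ u))
            = (∑ m, ξ m * φ u m) ^ 2 * g (φ u)
        rw [sq, Finset.sum_mul_sum, Finset.sum_mul]
        refine (Finset.sum_congr rfl fun m _ => ?_).symm
        rw [Finset.sum_mul]
        exact Finset.sum_congr rfl fun l _ => by ring
      have hnn : (0 : EuclideanSpace ℝ (Fin (d - 1)) → ℝ) ≤ fun u =>
          (∑ m, ξ m * φ u m) ^ 2 * g (φ u) :=
        fun u => mul_nonneg (sq_nonneg _) (hg0 _)
      have hae := (integral_eq_zero_iff_of_nonneg hnn hintq).mp hzero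
      have hzero_fun : (fun u : EuclideanSpace ℝ (Fin (d - 1)) =>
          (∑ m, ξ m * φ u m) ^ 2 * g (φ u)) = 0 :=
        (hcont2.ae_eq_iff_eq volume continuous_const).mp hae
      have hptwise : ∀ u : EuclideanSpace ℝ (Fin (d - 1)),
          (∑ m, ξ m * φ u m) ^ 2 * g (φ u) = 0 := fun u => congrFun hzero_fun u
      -- g positive near 0
      have hopen : IsOpen {u : EuclideanSpace ℝ (Fin (d - 1)) | 0 < g (φ u)} :=
        isOpen_lt continuous_const (hg.comp hφc)
      have h0mem : (0 : EuclideanSpace ℝ (Fin (d - 1))) ∈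
          {u : EuclideanSpace ℝ (Fin (d - 1)) | 0 < g (φ u)} := by
        simpa [map_zero] using hgpos
      obtain ⟨ε, hε, hball⟩ := Metric.isOpen_iff.mp hopen 0 h0mem
      -- the linear functional vanishes near 0
      have hvan : ∀ u : EuclideanSpace ℝ (Fin (d - 1)), ‖u‖ < ε → ∑ m, ξ m * φ u m = 0 := by
        intro u hu
        have hmem : u ∈ Metric.ball (0 : EuclideanSpace ℝ (Fin (d - 1))) ε := by
          simpa [Metric.mem_ball, dist_zero_right] using hu
        have hgpos' : 0 < g (φ u) := hball hmem
        have := hptwise u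
        have hsq : (∑ m, ξ m * φ u m) ^ 2 = 0 := by
          by_contra hne
          exact hne (by
            have := mul_eq_zero.mp this
            rcases this with h | h
            · exact h
            · exact absurd h (ne_of_gt hgpos'))
        exact pow_eq_zero_iff (n := 2) (by norm_num) |>.mp hsq
      -- hence everywhere, by linearity
      have hvan_all : ∀ u : EuclideanSpace ℝ (Fin (d - 1)), ∑ m, ξ m * φ u m = 0 := by
        intro u
        rcases eq_or_ne u 0 with rfl | hu
        · simp [map_zero]
        · have hnorm : 0 < ‖u‖ := norm_pos_iff.mpr hu
          set t : ℝ := ε / (2 * ‖u‖) with ht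
          have htpos : 0 < t := div_pos hε (by positivity)
          have htu : ‖t • u‖ < ε := by
            rw [norm_smul, Real.norm_eq_abs, abs_of_pos htpos, ht]
            rw [div_mul_eq_mul_div, mul_comm]
            rw [div_lt_iff₀ (by positivity)]
            nlinarith
          have h1 := hvan (t • u) htu
          have h2 : ∀ m : Fin d, φ (t • u) m = t * φ u m := by
            intro m
            rw [φ.map_smul]
            rfl
          rw [Finset.sum_congr rfl (fun m _ => by rw [h2 m])] at h1
          have h3 : t * ∑ m, ξ m * φ u m = 0 := by
            rw [Finset.mul_sum]
            rw [← h1]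
            exact Finset.sum_congr rfl fun m _ => by ring
          exact (mul_eq_zero.mp h3).resolve_left (ne_of_gt htpos)
      -- orthogonality: ξ as Euclidean vector is orthogonal to e^⊥
      set ξ' : EuclideanSpace ℝ (Fin d) := (EuclideanSpace.equiv (Fin d) ℝ).symm ξ with hξ'
      have hperp : ∀ p : EuclideanSpace ℝ (Fin d), ⟪p, e⟫ = 0 → ⟪p, ξ'⟫ = 0 := by
        intro p hp
        have : p ∈ Set.range ⇑φ := by rw [hφ]; exact hp
        obtain ⟨u, rfl⟩ := this
        have := hvan_all u
        simp only [PiLp.inner_apply, RCLike.inner_apply, conj_trivial]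
        rw [← this]
        exact Finset.sum_congr rfl fun m _ => by rfl
      have hmem : ξ' ∈ ((ℝ ∙ e)ᗮ)ᗮ := by
        intro p hp
        exact hperp p (Submodule.mem_orthogonal_singleton_iff_inner_left.mp hp)
      rw [Submodule.orthogonal_orthogonal] at hmem
      obtain ⟨c, hc⟩ := Submodule.mem_span_singleton.mp hmem
      refine Submodule.mem_span_singleton.mpr ⟨c, ?_⟩
      funext m
      have := congrFun (congrArg (fun v : EuclideanSpace ℝ (Fin d) =>
        (EuclideanSpace.equiv (Fin d) ℝ) v) hc) m
      simpa [he', hξ'] using this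
    · rw [Submodule.span_singleton_le_iff_mem]
      exact heker
  refine ⟨hker, ?_⟩
  have he'ne : e' ≠ 0 := by
    intro h
    have : e = 0 := by
      have := congrArg (EuclideanSpace.equiv (Fin d) ℝ).symm h
      simpa [he'] using this
    rw [this] at he
    simp at he
  have hkerdim : Module.finrank ℝ (LinearMap.ker D.mulVecLin) = 1 := by
    rw [hker]
    exact finrank_span_singleton he'ne
  have hrn := LinearMap.finrank_range_add_finrank_ker D.mulVecLin
  rw [hkerdim, Module.finrank_fin_fun] at hrn
  omega
end
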